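/- Let M be an invertible m×m matrix over F₂ and let G = T₂ ⊗ M (block form ((M,0),(M,M)), rows 0,…,m−1 upper, rows m,…,2m−1 lower). For all nonnegative integers a ≤ m and b ≤ m with a + b ≥ 1, there exists a subset I ⊆ {0,…,2m−1} with exactly a elements in {0,…,m−1} and exactly b elements in {m,…,2m−1} such that d_G(I) ≥ φ(a,b), where φ(a,0) = S_M(a), φ(0,b) = 2·S_M(b), and φ(a,b) = min(S_M(a), 2·S_M(b)) when a ≥ 1 and b ≥ 1. -/

import Mathlib

open Matrix

noncomputable section

abbrev F2 : Type := ZMod 2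

/-- The Arikan kernel `T₂ = ((1,0),(1,1))` over `F₂`. -/
def T2 : Matrix (Fin 2) (Fin 2) F2 := !![1, 0; 1, 1]

/-- Kronecker product of `Fin`-indexed square matrices, with the standard index
convention `(A ⊗ B) i j = A (i / n) (j / n) * B (i % n) (j % n)`. -/
def kron {m n : ℕ} (A : Matrix (Fin m) (Fin m) F2) (B : Matrix (Fin n) (Fin n) F2) :
    Matrix (Fin (m * n)) (Fin (m * n)) F2 :=
  fun i j => A i.divNat j.divNat * B i.modNat j.modNat

/-- The `n`-fold Kronecker power of `T₂` (with `T₂^{⊗0}` the 1×1 identity). -/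
def T2pow : (n : ℕ) → Matrix (Fin (2 ^ n)) (Fin (2 ^ n)) F2
  | 0 => 1
  | n + 1 => (kron T2 (T2pow n)).submatrix
      (Fin.cast (by rw [pow_succ, Nat.mul_comm]))
      (Fin.cast (by rw [pow_succ, Nat.mul_comm]))

/-- Minimum distance `d_G(I)`: the minimum Hamming weight of `u · G` over all
nonzero row vectors `u` with support contained in `I`. -/
def minDist {N : ℕ} (G : Matrix (Fin N) (Fin N) F2) (I : Finset (Fin N)) : ℕ :=
  sInf {w | ∃ u : Fin N → F2, u ≠ 0 ∧ (∀ i, u i ≠ 0 → i ∈ I) ∧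
    hammingNorm (Matrix.vecMul u G) = w}

/-- Minimum-distance spectrum `S_G(K)`: the maximum of `d_G(I)` over all
row-index sets `I` of size `K`. -/
def spec {N : ℕ} (G : Matrix (Fin N) (Fin N) F2) (K : ℕ) : ℕ :=
  sSup {d | ∃ I : Finset (Fin N), I.card = K ∧ minDist G I = d}

/-- `K`-th largest element (1-indexed, counted with multiplicity) of a
multiset of natural numbers. -/
def kthLargest (s : Multiset ℕ) (K : ℕ) : ℕ :=
  ((s.sort (· ≤ ·)).reverse).getD (K - 1) 0

/-- The quantity φ(a,b) from the max–min recursion: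
`φ(a,0) = S(a)`, `φ(0,b) = 2·S(b)`, and `φ(a,b) = min(S(a), 2·S(b))` for `a,b ≥ 1`. -/
def phi (S : ℕ → ℕ) (a b : ℕ) : ℕ :=
  if a = 0 then 2 * S b else if b = 0 then S a else min (S a) (2 * S b)



lemma spec_attained {N : ℕ} (G : Matrix (Fin N) (Fin N) F2) (K : ℕ) (hK : K ≤ N) :
    ∃ I : Finset (Fin N), I.card = K ∧ minDist G I = spec G K := by
  have hset : {d | ∃ I : Finset (Fin N), I.card = K ∧ minDist G I = d}
      = (fun I : Finset (Fin N) => minDist G I) '' {I | I.card = K} := by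
    ext d; simp [eq_comm]
  have hfin : ({d | ∃ I : Finset (Fin N), I.card = K ∧ minDist G I = d}).Finite := by
    rw [hset]; exact (Set.toFinite _).image _
  have hne : ({d | ∃ I : Finset (Fin N), I.card = K ∧ minDist G I = d}).Nonempty := by
    obtain ⟨I, _, hI⟩ := Finset.exists_subset_card_eq (by simpa using hK :
      K ≤ (Finset.univ : Finset (Fin N)).card)
    exact ⟨minDist G I, I, hI, rfl⟩
  have := Nat.sSup_mem hne hfin.bddAbove
  obtain ⟨I, hc, hd⟩ := this
  exact ⟨I, hc, hd⟩

lemma hammingNorm_add_le' {N : ℕ} (x y : Fin N → F2) :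
    hammingNorm (x + y) ≤ hammingNorm x + hammingNorm y := by
  have h1 := hammingDist_triangle (x + y) y (0 : Fin N → F2)
  have h2 : hammingDist (x + y) y = hammingNorm x := by
    rw [hammingDist_eq_hammingNorm]; congr 1
    funext i; simp only [Pi.sub_apply, Pi.add_apply, Pi.neg_apply]
    generalize x i = p; generalize y i = q; revert p q; decide
  simpa [h2, hammingDist_zero_right] using h1

def upF {m : ℕ} (k : Fin m) : Fin (2 * m) := ⟨(k : ℕ), by omega⟩
def lowF {m : ℕ} (k : Fin m) : Fin (2 * m) := ⟨m + (k : ℕ), by omega⟩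

def splitEquiv (m : ℕ) : Fin m ⊕ Fin m ≃ Fin (2 * m) :=
  (finSumFinEquiv).trans (finCongr (two_mul m).symm)

lemma splitEquiv_inl {m : ℕ} (k : Fin m) : splitEquiv m (Sum.inl k) = upF k := by
  simp [splitEquiv, upF, Fin.ext_iff]

lemma splitEquiv_inr {m : ℕ} (k : Fin m) : splitEquiv m (Sum.inr k) = lowF k := by
  simp [splitEquiv, lowF, Fin.ext_iff]; omega

lemma sum_split {m : ℕ} {β : Type*} [AddCommMonoid β] (f : Fin (2 * m) → β) :
    ∑ i, f i = ∑ k : Fin m, f (upF k) + ∑ k : Fin m, f (lowF k) := by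
  rw [← Equiv.sum_comp (splitEquiv m) f, Fintype.sum_sum_type]
  simp [splitEquiv_inl, splitEquiv_inr]

lemma hammingNorm_split {m : ℕ} (v : Fin (2 * m) → F2) :
    hammingNorm v = hammingNorm (fun k => v (upF k)) + hammingNorm (fun k => v (lowF k)) := by
  simp only [hammingNorm, Finset.card_filter]
  exact sum_split _

lemma upF_modNat {m : ℕ} (k : Fin m) : (upF k).modNat = k := by
  have : (k : ℕ) < m := k.isLt
  simp [upF, Fin.modNat, Fin.ext_iff, Nat.mod_eq_of_lt this]

lemma upF_divNat {m : ℕ} (k : Fin m) : ((upF k).divNat : Fin 2) = 0 := by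
  simp [upF, Fin.divNat, Fin.ext_iff, Nat.div_eq_of_lt k.isLt]

lemma lowF_modNat {m : ℕ} (k : Fin m) : (lowF k).modNat = k := by
  have : (k : ℕ) < m := k.isLt
  simp [lowF, Fin.modNat, Fin.ext_iff, Nat.add_mod_left, Nat.mod_eq_of_lt this]

lemma lowF_divNat {m : ℕ} (k : Fin m) : ((lowF k).divNat : Fin 2) = 1 := by
  have hm : 0 < m := k.pos
  have : (m + (k : ℕ)) / m = 1 := by
    rw [Nat.add_div_left _ hm, Nat.div_eq_of_lt k.isLt]
  simp [lowF, Fin.divNat, Fin.ext_iff, this]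

lemma vecMul_kron_up {m : ℕ} (M : Matrix (Fin m) (Fin m) F2) (u : Fin (2 * m) → F2)
    (j : Fin m) :
    Matrix.vecMul u (kron T2 M) (upF j) =
      Matrix.vecMul (fun k => u (upF k) + u (lowF k)) M j := by
  simp only [Matrix.vecMul, dotProduct, kron]
  rw [sum_split (fun i => u i * (T2 i.divNat (upF j).divNat * M i.modNat (upF j).modNat))]
  simp only [upF_divNat, lowF_divNat, upF_modNat, lowF_modNat]
  have h0 : T2 0 0 = 1 := by simp [T2]
  have h1 : T2 1 0 = 1 := by simp [T2]
  rw [← Finset.sum_add_distrib]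
  congr 1; ext k
  rw [h0, h1]; ring

lemma vecMul_kron_low {m : ℕ} (M : Matrix (Fin m) (Fin m) F2) (u : Fin (2 * m) → F2)
    (j : Fin m) :
    Matrix.vecMul u (kron T2 M) (lowF j) =
      Matrix.vecMul (fun k => u (lowF k)) M j := by
  simp only [Matrix.vecMul, dotProduct, kron]
  rw [sum_split (fun i => u i * (T2 i.divNat (lowF j).divNat * M i.modNat (lowF j).modNat))]
  simp only [upF_divNat, lowF_divNat, upF_modNat, lowF_modNat]
  have h0 : T2 0 1 = 0 := by simp [T2]
  have h1 : T2 1 1 = 1 := by simp [T2]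
  rw [h0, h1]
  simp

theorem exists_split_info_set_kron_T2
    (m : ℕ) (M : Matrix (Fin m) (Fin m) F2) (hM : IsUnit M)
    (a b : ℕ) (ha : a ≤ m) (hb : b ≤ m) (hab : 1 ≤ a + b) :
    ∃ I : Finset (Fin (2 * m)),
      (I.filter (fun i : Fin (2 * m) => (i : ℕ) < m)).card = a ∧
      (I.filter (fun i : Fin (2 * m) => m ≤ (i : ℕ))).card = b ∧
      phi (spec M) a b ≤ minDist (kron T2 M) I := by
  obtain ⟨A, hAcard, hAmin⟩ := spec_attained M a ha
  obtain ⟨B, hBcard, hBmin⟩ := spec_attained M b hb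
  have hupInj : Function.Injective (upF (m := m)) := by
    intro x y h; simpa [upF, Fin.ext_iff] using h
  have hlowInj : Function.Injective (lowF (m := m)) := by
    intro x y h; simp only [lowF, Fin.ext_iff] at h ⊢; omega
  set I : Finset (Fin (2 * m)) := A.image upF ∪ B.image lowF with hI
  have hmemI : ∀ i : Fin (2 * m), i ∈ I ↔
      (∃ k ∈ A, upF k = i) ∨ (∃ k ∈ B, lowF k = i) := by
    intro i; simp [hI]
  have hfilt1 : I.filter (fun i : Fin (2 * m) => (i : ℕ) < m) = A.image upF := by
    ext i
    simp only [Finset.mem_filter, hmemI i, Finset.mem_image]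
    constructor
    · rintro ⟨h | h, hlt⟩
      · exact h
      · exfalso; obtain ⟨k, _, rfl⟩ := h; simp [lowF] at hlt
    · rintro ⟨k, hk, rfl⟩
      exact ⟨Or.inl ⟨k, hk, rfl⟩, k.isLt⟩
  have hfilt2 : I.filter (fun i : Fin (2 * m) => m ≤ (i : ℕ)) = B.image lowF := by
    ext i
    simp only [Finset.mem_filter, hmemI i, Finset.mem_image]
    constructor
    · rintro ⟨h | h, hle⟩
      · exfalso; obtain ⟨k, _, rfl⟩ := h; have := k.isLt; simp [upF] at hle; omega
      · exact h
    · rintro ⟨k, hk, rfl⟩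
      exact ⟨Or.inr ⟨k, hk, rfl⟩, Nat.le_add_right m k⟩
  have hc1 : (I.filter (fun i : Fin (2 * m) => (i : ℕ) < m)).card = a := by
    rw [hfilt1, Finset.card_image_of_injective _ hupInj, hAcard]
  have hc2 : (I.filter (fun i : Fin (2 * m) => m ≤ (i : ℕ))).card = b := by
    rw [hfilt2, Finset.card_image_of_injective _ hlowInj, hBcard]
  refine ⟨I, hc1, hc2, ?_⟩
  -- nonemptiness of the minDist set
  have hIne : I.Nonempty := by
    by_contra h
    rw [Finset.not_nonempty_iff_eq_empty] at h
    rw [h] at hc1 hc2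
    simp at hc1 hc2
    omega
  obtain ⟨i₀, hi₀⟩ := hIne
  have hne : {w | ∃ u : Fin (2 * m) → F2, u ≠ 0 ∧ (∀ i, u i ≠ 0 → i ∈ I) ∧
      hammingNorm (Matrix.vecMul u (kron T2 M)) = w}.Nonempty := by
    refine ⟨_, Pi.single i₀ 1, ?_, ?_, rfl⟩
    · intro h
      have := congrFun h i₀
      simp [Pi.single_apply] at this
    · intro i hi
      by_cases h : i = i₀
      · subst h; exact hi₀
      · simp [Pi.single_apply, h] at hi
  refine le_csInf hne ?_
  rintro w ⟨u, hu0, hsupp, rfl⟩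
  set u₀ : Fin m → F2 := fun k => u (upF k) with hu₀def
  set u₁ : Fin m → F2 := fun k => u (lowF k) with hu₁def
  have hsup0 : ∀ k, u₀ k ≠ 0 → k ∈ A := by
    intro k hk
    have := hsupp (upF k) hk
    rw [hmemI] at this
    rcases this with ⟨k', hk', he⟩ | ⟨k', _, he⟩
    · rwa [← hupInj he]
    · exfalso
      have h1 : m + (k' : ℕ) = (k : ℕ) := by simpa [lowF, upF, Fin.ext_iff] using he
      have := k.isLt; omega
  have hsup1 : ∀ k, u₁ k ≠ 0 → k ∈ B := by
    intro k hk
    have := hsupp (lowF k) hk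
    rw [hmemI] at this
    rcases this with ⟨k', _, he⟩ | ⟨k', hk', he⟩
    · exfalso
      have h1 : (k' : ℕ) = m + (k : ℕ) := by simpa [lowF, upF, Fin.ext_iff] using he
      have := k'.isLt; omega
    · rwa [← hlowInj he]
  have hnorm : hammingNorm (Matrix.vecMul u (kron T2 M)) =
      hammingNorm (Matrix.vecMul (u₀ + u₁) M) + hammingNorm (Matrix.vecMul u₁ M) := by
    rw [hammingNorm_split]
    congr 1
    · congr 1
      funext j
      rw [vecMul_kron_up]
      rfl
    · congr 1
      funext j
      rw [vecMul_kron_low]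
  rw [hnorm]
  by_cases h0 : u₀ = 0
  · -- lower half only: weight = 2 * wt(u₁ M) ≥ 2 * spec M b ≥ phi
    have hu1 : u₁ ≠ 0 := by
      intro h1
      apply hu0
      funext i
      obtain ⟨x, rfl⟩ := (splitEquiv m).surjective i
      cases x with
      | inl k => rw [splitEquiv_inl]; exact congrFun h0 k
      | inr k => rw [splitEquiv_inr]; exact congrFun h1 k
    have hble : minDist M B ≤ hammingNorm (Matrix.vecMul u₁ M) :=
      Nat.sInf_le ⟨u₁, hu1, hsup1, rfl⟩
    have hb1 : b ≠ 0 := by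
      obtain ⟨k, hk⟩ := Function.ne_iff.mp hu1
      have : k ∈ B := hsup1 k hk
      intro h; rw [h] at hBcard
      rw [Finset.card_eq_zero] at hBcard
      simp [hBcard] at this
    have hphi : phi (spec M) a b ≤ 2 * spec M b := by
      unfold phi
      split_ifs
      all_goals first
        | exact le_refl _
        | exact absurd ‹b = 0› hb1
        | exact min_le_right _ _
    have : (u₀ + u₁) = u₁ := by rw [h0, zero_add]
    rw [this]
    rw [← hBmin] at hphi
    omega
  · -- u₀ ≠ 0: weight ≥ wt(u₀ M) ≥ spec M a ≥ phi
    have hkey : hammingNorm (Matrix.vecMul u₀ M) ≤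
        hammingNorm (Matrix.vecMul (u₀ + u₁) M) + hammingNorm (Matrix.vecMul u₁ M) := by
      have heq : Matrix.vecMul (u₀ + u₁) M + Matrix.vecMul u₁ M = Matrix.vecMul u₀ M := by
        rw [Matrix.add_vecMul]
        funext j
        simp only [Pi.add_apply]
        rw [add_assoc, CharTwo.add_self_eq_zero, add_zero]
      calc hammingNorm (Matrix.vecMul u₀ M)
          = hammingNorm (Matrix.vecMul (u₀ + u₁) M + Matrix.vecMul u₁ M) := by rw [heq]
        _ ≤ _ := hammingNorm_add_le' _ _
    have hale : minDist M A ≤ hammingNorm (Matrix.vecMul u₀ M) :=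
      Nat.sInf_le ⟨u₀, h0, hsup0, rfl⟩
    have ha1 : a ≠ 0 := by
      obtain ⟨k, hk⟩ := Function.ne_iff.mp h0
      have : k ∈ A := hsup0 k hk
      intro h; rw [h] at hAcard
      rw [Finset.card_eq_zero] at hAcard
      simp [hAcard] at this
    have hphi : phi (spec M) a b ≤ spec M a := by
      unfold phi
      split_ifs
      all_goals first
        | exact le_refl _
        | exact absurd ‹a = 0› ha1
        | exact min_le_left _ _
    rw [← hAmin] at hphi
    omega
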